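/- Fix positive reals d ≥ 1 and integer n ≥ 1, and let c := (1+d)/((1+d/n)^n − 1) and Q := (1+d)(1 + 1/((1+d/n)^n − 1)). Suppose reals w, m, β satisfy w ≥ β ≥ 0 and m ≥ 0. Then (2w − β) + (d·β + c·w − c·(1+d/n)^n · m) ≤ Q·(w − m). -/
import Mathlib


theorem stmt_12 (n : ℕ) (hn : 1 ≤ n) (d : ℝ) (hd : 1 ≤ d)
    (c Q : ℝ)
    (hc : c = (1 + d) / ((1 + d / n) ^ n - 1))
    (hQ : Q = (1 + d) * (1 + 1 / ((1 + d / n) ^ n - 1)))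
    (w m β : ℝ) (hwβ : β ≤ w) (hβ : 0 ≤ β) (hm : 0 ≤ m) :
    (2 * w - β) + (d * β + c * w - c * (1 + d / n) ^ n * m) ≤ Q * (w - m) := by
  have hn0 : (n : ℝ) ≠ 0 := by positivity
  have hbern : 1 + d ≤ (1 + d / n) ^ n := by
    have := one_add_mul_le_pow (a := d / n) (by nlinarith [div_nonneg (by linarith : (0:ℝ) ≤ d) (Nat.cast_nonneg n)]) n
    calc 1 + d = 1 + n * (d / n) := by field_simp
    _ ≤ _ := this
  have hs : (0:ℝ) < (1 + d / n) ^ n - 1 := by linarith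
  set s := (1 + d / n) ^ n - 1 with hsdef
  have hp : (1 + d / n) ^ n = s + 1 := by ring
  subst hc hQ
  rw [hp]
  have key : (1 + d) / s * (s + 1) = (1 + d) * (1 + 1 / s) := by field_simp
  have hcw : (1 + d) / s * w ≤ (1 + d) * (1 + 1 / s) * w - (1 + d) * w := by
    rw [← key]; have : (0:ℝ) ≤ w := le_trans hβ hwβ
    rw [mul_comm ((1+d)/s) (s+1)]
    have : ((s + 1) * ((1 + d) / s)) * w - (1+d) * w = ((1+d)/s) * w := by
      field_simp; ring
    linarith
  nlinarith [mul_le_mul_of_nonneg_left hwβ (by linarith : (0:ℝ) ≤ d - 1)]
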